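/- Consider the binomial likelihood p_{θ,n}(k) = C(n,k)·θ^k·(1−θ)^{n−k} on k ∈ {0,…,n} with θ ∈ (0,1), and for L ≥ ln n let Θ_L = [(1 + e^L/n)^{-1}, (1 + n/e^L)^{-1}] (which equals the set of θ for which d(p_{θ,n}(k₁), p_{θ,n}(k₂)) ≤ L·|k₁−k₂| for all k₁, k₂). Under the symmetric Beta(α, α) prior with α > 1, the prior mass outside Θ_L satisfies β(Θ_L^c) ≤ (2/(α·B(α,α)))·n^α·e^{−αL}, where B(α,α) is the Beta function; hence β(Θ_L) ≥ 1 − e^{−cL} holds for any c ≤ α − ln( 2·n^α/(α·B(α,α)) )/L whenever the right side is positive — in particular Assumption 2 holds with c = O(α). -/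

import Mathlib

open MeasureTheory

/-- The absolute log-ratio distance on `ℝ≥0` (represented as nonnegative reals). -/
noncomputable def lrdist (a b : ℝ) : ℝ :=
  if a = 0 ∧ b = 0 then 0 else |Real.log (a / b)|

/-- The binomial likelihood `p_{θ,n}(k) = C(n,k)·θ^k·(1−θ)^{n−k}`. -/
noncomputable def binomialDensity (θ : ℝ) (n k : ℕ) : ℝ :=
  (n.choose k : ℝ) * θ ^ k * (1 - θ) ^ (n - k)

/-- The Beta function `B(a,b) = ∫₀¹ x^{a−1}(1−x)^{b−1} dx`. -/
noncomputable def betaFn (a b : ℝ) : ℝ :=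
  ∫ x in (0 : ℝ)..1, x ^ (a - 1) * (1 - x) ^ (b - 1)

/-- The `Beta(a,b)` prior: density `θ^{a−1}(1−θ)^{b−1}/B(a,b)` on `(0,1)`. -/
noncomputable def betaPrior (a b : ℝ) : Measure ℝ :=
  volume.withDensity fun θ =>
    if θ ∈ Set.Ioo (0 : ℝ) 1 then
      ENNReal.ofReal (θ ^ (a - 1) * (1 - θ) ^ (b - 1) / betaFn a b) else 0

/-- The interval `Θ_L = [(1 + e^L/n)⁻¹, (1 + n/e^L)⁻¹]`. -/
noncomputable def thetaL (n : ℕ) (L : ℝ) : Set ℝ :=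
  Set.Icc ((1 + Real.exp L / n)⁻¹) ((1 + n / Real.exp L)⁻¹)

lemma binom_pos {θ : ℝ} (h0 : 0 < θ) (h1 : θ < 1) {n k : ℕ} (hk : k ≤ n) :
    0 < binomialDensity θ n k := by
  unfold binomialDensity
  have hc : (0:ℝ) < (n.choose k : ℝ) := by exact_mod_cast Nat.choose_pos hk
  have h1' : (0:ℝ) < 1 - θ := by linarith
  positivity

lemma succ_ratio (θ : ℝ) {n k : ℕ} (hk : k < n) :
    binomialDensity θ n (k + 1) * (((k : ℝ) + 1) * (1 - θ)) =
      binomialDensity θ n k * (((n : ℝ) - (k : ℝ)) * θ) := by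
  have hc : (n.choose (k + 1) : ℝ) * ((k : ℝ) + 1) = (n.choose k : ℝ) * ((n : ℝ) - (k : ℝ)) := by
    have h := congrArg (Nat.cast : ℕ → ℝ) (Nat.choose_succ_right_eq n k)
    push_cast [Nat.cast_sub hk.le] at h
    linarith
  unfold binomialDensity
  have h1 : n - k = (n - (k + 1)) + 1 := by omega
  rw [h1]
  linear_combination (θ ^ (k + 1) * (1 - θ) ^ (n - (k + 1) + 1)) * hc

lemma step_bound {θ L : ℝ} (h0 : 0 < θ) (h1 : θ < 1) {n k : ℕ} (hk : k < n)
    (hlo : (n : ℝ) * (1 - θ) ≤ Real.exp L * θ)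
    (hhi : (n : ℝ) * θ ≤ Real.exp L * (1 - θ)) :
    |Real.log (binomialDensity θ n (k + 1)) - Real.log (binomialDensity θ n k)| ≤ L := by
  set p1 := binomialDensity θ n (k + 1) with hp1
  set p0 := binomialDensity θ n k with hp0
  have hp1pos : 0 < p1 := binom_pos h0 h1 hk
  have hp0pos : 0 < p0 := binom_pos h0 h1 hk.le
  have hE : 0 < Real.exp L := Real.exp_pos L
  have hr := succ_ratio θ hk
  have hθ1 : 0 < 1 - θ := by linarith
  have hkn : (k : ℝ) + 1 ≤ (n : ℝ) := by exact_mod_cast hk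
  have hnk1 : (1 : ℝ) ≤ (n : ℝ) - (k : ℝ) := by
    have : (k : ℝ) ≤ (n : ℝ) - 1 := by linarith
    linarith
  have hcancel : 0 < ((k : ℝ) + 1) * (1 - θ) := by positivity
  -- upper: p1 ≤ exp L * p0
  have hup : p1 ≤ Real.exp L * p0 := by
    have key : p1 * (((k : ℝ) + 1) * (1 - θ)) ≤ Real.exp L * p0 * (((k : ℝ) + 1) * (1 - θ)) := by
      rw [hr]
      have c1 : ((n : ℝ) - k) * θ ≤ (n : ℝ) * θ := by nlinarith [Nat.cast_nonneg (α := ℝ) k]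
      have c2 : Real.exp L * (1 - θ) ≤ Real.exp L * (((k : ℝ) + 1) * (1 - θ)) := by
        nlinarith [Nat.cast_nonneg (α := ℝ) k]
      nlinarith
    exact le_of_mul_le_mul_right key hcancel
  -- lower: p0 ≤ exp L * p1
  have hdown : p0 ≤ Real.exp L * p1 := by
    have key : p0 * (((k : ℝ) + 1) * (1 - θ)) ≤ Real.exp L * p1 * (((k : ℝ) + 1) * (1 - θ)) := by
      have : Real.exp L * (p1 * (((k : ℝ) + 1) * (1 - θ))) = Real.exp L * (p0 * (((n : ℝ) - k) * θ)) := by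
        rw [hr]
      have c1 : ((k : ℝ) + 1) * (1 - θ) ≤ (n : ℝ) * (1 - θ) := by nlinarith
      have c2 : Real.exp L * θ ≤ Real.exp L * (((n : ℝ) - k) * θ) := by nlinarith
      nlinarith
    exact le_of_mul_le_mul_right key hcancel
  rw [← Real.log_div hp1pos.ne' hp0pos.ne']
  have hq : 0 < p1 / p0 := by positivity
  rw [abs_le]
  constructor
  · rw [Real.le_log_iff_exp_le hq, le_div_iff₀ hp0pos, Real.exp_neg]
    rw [inv_mul_le_iff₀ hE] at *
    nlinarith [Real.exp_pos L]
  · rw [Real.log_le_iff_le_exp hq, div_le_iff₀ hp0pos]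
    linarith [hup]

lemma tele_bound {θ L : ℝ} (h0 : 0 < θ) (h1 : θ < 1) {n : ℕ}
    (hlo : (n : ℝ) * (1 - θ) ≤ Real.exp L * θ)
    (hhi : (n : ℝ) * θ ≤ Real.exp L * (1 - θ)) :
    ∀ m k : ℕ, k + m ≤ n →
      |Real.log (binomialDensity θ n (k + m)) - Real.log (binomialDensity θ n k)| ≤ L * m := by
  intro m
  induction m with
  | zero => intro k _; simp
  | succ m ih =>
    intro k hk
    have hstep := step_bound h0 h1 (show k + m < n by omega) hlo hhi
    have hrec := ih k (by omega)
    have heq : k + (m + 1) = (k + m) + 1 := by omega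
    rw [heq]
    calc |Real.log (binomialDensity θ n ((k + m) + 1)) - Real.log (binomialDensity θ n k)|
        ≤ |Real.log (binomialDensity θ n ((k + m) + 1)) - Real.log (binomialDensity θ n (k + m))|
          + |Real.log (binomialDensity θ n (k + m)) - Real.log (binomialDensity θ n k)| :=
          abs_sub_le _ _ _
      _ ≤ L + L * m := add_le_add hstep hrec
      _ = L * ((m : ℝ) + 1) := by ring
      _ = L * ((m + 1 : ℕ) : ℝ) := by push_cast; ring

lemma thetaL_char (n : ℕ) (hn : 1 ≤ n) (L : ℝ) (hL : Real.log n ≤ L) :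
    Set.Icc ((1 + Real.exp L / n)⁻¹) ((1 + (n : ℝ) / Real.exp L)⁻¹) =
      {θ : ℝ | θ ∈ Set.Ioo (0 : ℝ) 1 ∧ ∀ k₁ k₂ : ℕ, k₁ ≤ n → k₂ ≤ n →
        lrdist (binomialDensity θ n k₁) (binomialDensity θ n k₂)
          ≤ L * |(k₁ : ℝ) - (k₂ : ℝ)|} := by
  have hN : (0 : ℝ) < n := by exact_mod_cast hn
  have hE : (0 : ℝ) < Real.exp L := Real.exp_pos L
  have hEN : (n : ℝ) ≤ Real.exp L := by
    calc (n : ℝ) = Real.exp (Real.log n) := (Real.exp_log hN).symm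
      _ ≤ Real.exp L := Real.exp_le_exp.mpr hL
  have hlo_pos : (0 : ℝ) < 1 + Real.exp L / n := by positivity
  have hhi_pos : (0 : ℝ) < 1 + (n : ℝ) / Real.exp L := by positivity
  ext θ
  simp only [Set.mem_Icc, Set.mem_setOf_eq, Set.mem_Ioo]
  constructor
  · rintro ⟨hθlo, hθhi⟩
    have h0 : 0 < θ := lt_of_lt_of_le (by positivity) hθlo
    have h1 : θ < 1 := by
      calc θ ≤ (1 + (n : ℝ) / Real.exp L)⁻¹ := hθhi
        _ < 1 := by
          rw [inv_lt_one_iff₀]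
          right
          have := div_pos hN hE
          linarith
    have hθ1 : 0 < 1 - θ := by linarith
    -- derive the two key inequalities
    have hlo : (n : ℝ) * (1 - θ) ≤ Real.exp L * θ := by
      have h := mul_le_mul_of_nonneg_right hθlo (le_of_lt hlo_pos)
      rw [inv_mul_cancel₀ hlo_pos.ne'] at h
      -- 1 ≤ θ * (1 + E/N)
      have h2 := mul_le_mul_of_nonneg_right h (le_of_lt hN)
      have hc : Real.exp L / n * (n : ℝ) = Real.exp L := div_mul_cancel₀ _ hN.ne'
      nlinarith
    have hhi : (n : ℝ) * θ ≤ Real.exp L * (1 - θ) := by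
      have h := mul_le_mul_of_nonneg_right hθhi (le_of_lt hhi_pos)
      rw [inv_mul_cancel₀ hhi_pos.ne'] at h
      have h2 := mul_le_mul_of_nonneg_right h (le_of_lt hE)
      have hc : (n : ℝ) / Real.exp L * Real.exp L = (n : ℝ) := div_mul_cancel₀ _ hE.ne'
      nlinarith
    refine ⟨⟨h0, h1⟩, fun k₁ k₂ hk₁ hk₂ => ?_⟩
    have hp₁ := binom_pos h0 h1 hk₁
    have hp₂ := binom_pos h0 h1 hk₂
    rw [lrdist, if_neg (by push_neg; intro h; exact absurd h hp₁.ne')]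
    rw [Real.log_div hp₁.ne' hp₂.ne']
    rcases le_total k₂ k₁ with hle | hle
    · obtain ⟨m, hm⟩ : ∃ m, k₁ = k₂ + m := ⟨k₁ - k₂, by omega⟩
      subst hm
      have := tele_bound h0 h1 hlo hhi m k₂ hk₁
      calc |Real.log (binomialDensity θ n (k₂ + m)) - Real.log (binomialDensity θ n k₂)| ≤ L * m :=
            this
        _ = L * |((k₂ + m : ℕ) : ℝ) - (k₂ : ℝ)| := by
            congr 1
            push_cast
            rw [abs_of_nonneg (by linarith [Nat.cast_nonneg (α := ℝ) m])]
            ring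
    · obtain ⟨m, hm⟩ : ∃ m, k₂ = k₁ + m := ⟨k₂ - k₁, by omega⟩
      subst hm
      have := tele_bound h0 h1 hlo hhi m k₁ hk₂
      rw [abs_sub_comm]
      calc |Real.log (binomialDensity θ n (k₁ + m)) - Real.log (binomialDensity θ n k₁)| ≤ L * m :=
            this
        _ = L * |((k₁ : ℕ) : ℝ) - ((k₁ + m : ℕ) : ℝ)| := by
            congr 1
            push_cast
            rw [abs_sub_comm, abs_of_nonneg (by linarith [Nat.cast_nonneg (α := ℝ) m])]
            ring
  · rintro ⟨⟨h0, h1⟩, hcond⟩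
    have hθ1 : 0 < 1 - θ := by linarith
    have hp0 := binom_pos h0 h1 (show 0 ≤ n by omega)
    have hp1 := binom_pos h0 h1 hn
    have hpn := binom_pos h0 h1 (le_refl n)
    have hpn1 := binom_pos h0 h1 (show n - 1 ≤ n by omega)
    constructor
    · -- lower bound from k = n-1, n
      have hcnd := hcond n (n - 1) (le_refl n) (by omega)
      rw [lrdist, if_neg (by push_neg; intro h; exact absurd h hpn.ne')] at hcnd
      have hcast : |((n : ℕ) : ℝ) - ((n - 1 : ℕ) : ℝ)| = 1 := by
        rw [Nat.cast_sub hn]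
        push_cast
        rw [abs_of_nonneg] <;> norm_num
      rw [hcast, mul_one] at hcnd
      have hq : 0 < binomialDensity θ n n / binomialDensity θ n (n - 1) := by positivity
      have hlow : Real.exp (-L) * binomialDensity θ n (n - 1) ≤ binomialDensity θ n n := by
        have h' : Real.exp (-L) ≤ binomialDensity θ n n / binomialDensity θ n (n - 1) := by
          rw [← Real.le_log_iff_exp_le hq]
          linarith [(abs_le.mp hcnd).1]
        rw [le_div_iff₀ hpn1] at h'
        linarith
      have hr := succ_ratio θ (show n - 1 < n by omega)
      have hidx : n - 1 + 1 = n := by omega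
      rw [hidx] at hr
      have hcast2 : ((n - 1 : ℕ) : ℝ) = (n : ℝ) - 1 := by rw [Nat.cast_sub hn]; norm_num
      rw [hcast2] at hr
      have hr' : binomialDensity θ n n * ((n : ℝ) * (1 - θ)) = binomialDensity θ n (n - 1) * θ := by
        linear_combination hr
      have h3 : Real.exp L * Real.exp (-L) = 1 := by rw [← Real.exp_add]; norm_num
      have h7 : binomialDensity θ n n * (Real.exp (-L) * ((n : ℝ) * (1 - θ)))
          ≤ binomialDensity θ n n * θ := by
        calc binomialDensity θ n n * (Real.exp (-L) * ((n : ℝ) * (1 - θ)))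
            = Real.exp (-L) * (binomialDensity θ n n * ((n : ℝ) * (1 - θ))) := by ring
          _ = Real.exp (-L) * binomialDensity θ n (n - 1) * θ := by rw [hr']; ring
          _ ≤ binomialDensity θ n n * θ := mul_le_mul_of_nonneg_right hlow h0.le
      have h8 : Real.exp (-L) * ((n : ℝ) * (1 - θ)) ≤ θ := le_of_mul_le_mul_left h7 hpn
      have h9 : (n : ℝ) * (1 - θ) ≤ Real.exp L * θ := by
        calc (n : ℝ) * (1 - θ) = Real.exp L * Real.exp (-L) * ((n : ℝ) * (1 - θ)) := by
              rw [h3]; ring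
          _ = Real.exp L * (Real.exp (-L) * ((n : ℝ) * (1 - θ))) := by ring
          _ ≤ Real.exp L * θ := mul_le_mul_of_nonneg_left h8 hE.le
      have heq : (1 + Real.exp L / (n : ℝ))⁻¹ = (n : ℝ) / ((n : ℝ) + Real.exp L) := by
        rw [eq_div_iff (by positivity)]
        field_simp
      rw [heq, div_le_iff₀ (by positivity)]
      nlinarith
    · -- upper bound from k = 0, 1
      have hcnd := hcond 1 0 hn (by omega)
      rw [lrdist, if_neg (by push_neg; intro h; exact absurd h hp1.ne')] at hcnd
      norm_num at hcnd
      have hq : 0 < binomialDensity θ n 1 / binomialDensity θ n 0 := by positivity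
      have hup : binomialDensity θ n 1 ≤ Real.exp L * binomialDensity θ n 0 := by
        have h' : binomialDensity θ n 1 / binomialDensity θ n 0 ≤ Real.exp L := by
          rw [← Real.log_le_iff_le_exp hq]
          linarith [(abs_le.mp hcnd).2]
        rw [div_le_iff₀ hp0] at h'
        linarith
      have hr := succ_ratio θ (show 0 < n by omega)
      push_cast at hr
      have h7 : binomialDensity θ n 0 * ((n : ℝ) * θ)
          ≤ binomialDensity θ n 0 * (Real.exp L * (1 - θ)) := by
        calc binomialDensity θ n 0 * ((n : ℝ) * θ)
            = binomialDensity θ n 1 * (1 - θ) := by linear_combination -hr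
          _ ≤ Real.exp L * binomialDensity θ n 0 * (1 - θ) :=
              mul_le_mul_of_nonneg_right hup hθ1.le
          _ = binomialDensity θ n 0 * (Real.exp L * (1 - θ)) := by ring
      have hkey : (n : ℝ) * θ ≤ Real.exp L * (1 - θ) := le_of_mul_le_mul_left h7 hp0
      have heq : (1 + (n : ℝ) / Real.exp L)⁻¹ = Real.exp L / (Real.exp L + (n : ℝ)) := by
        rw [eq_div_iff (by positivity)]
        field_simp
      rw [heq, le_div_iff₀ (by positivity)]
      nlinarith

lemma rpow_cont {a : ℝ} (ha : 1 < a) : Continuous fun x : ℝ => x ^ (a - 1) :=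
  continuous_iff_continuousAt.mpr fun x =>
    Real.continuousAt_rpow_const x (a - 1) (Or.inr (by linarith))

lemma betaDens_cont {a : ℝ} (ha : 1 < a) :
    Continuous fun x : ℝ => x ^ (a - 1) * (1 - x) ^ (a - 1) :=
  (rpow_cont ha).mul ((rpow_cont ha).comp (continuous_const.sub continuous_id))

lemma betaFn_pos {a : ℝ} (ha : 1 < a) : 0 < betaFn a a := by
  apply intervalIntegral.intervalIntegral_pos_of_pos_on
  · exact ((betaDens_cont ha).continuousOn).intervalIntegrable
  · intro x hx
    have h1 : 0 < x := hx.1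
    have h2 : 0 < 1 - x := by linarith [hx.2]
    positivity
  · norm_num

lemma lint_rpow {a : ℝ} (ha : 1 < a) {B t : ℝ} (hB : 0 < B) (ht : 0 ≤ t) :
    ∫⁻ x in Set.Ioo (0 : ℝ) t, ENNReal.ofReal (x ^ (a - 1) / B) =
      ENNReal.ofReal (t ^ a / a / B) := by
  rw [← ofReal_integral_eq_lintegral_ofReal]
  · congr 1
    rw [← integral_Ioc_eq_integral_Ioo, ← intervalIntegral.integral_of_le ht,
      intervalIntegral.integral_div, integral_rpow (Or.inl (by linarith))]
    norm_num
    rw [Real.zero_rpow (by linarith)]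
    ring_nf
  · exact (((rpow_cont ha).div_const B).continuousOn.integrableOn_Icc).mono_set
      Set.Ioo_subset_Icc_self
  · filter_upwards [ae_restrict_mem measurableSet_Ioo] with x hx
    have : (0:ℝ) < x := hx.1
    positivity

lemma lint_rpow_right {a : ℝ} (ha : 1 < a) {B s : ℝ} (hB : 0 < B) (hs : s ≤ 1) :
    ∫⁻ x in Set.Ioo s (1 : ℝ), ENNReal.ofReal ((1 - x) ^ (a - 1) / B) =
      ENNReal.ofReal ((1 - s) ^ a / a / B) := by
  rw [← ofReal_integral_eq_lintegral_ofReal]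
  · congr 1
    rw [← integral_Ioc_eq_integral_Ioo, ← intervalIntegral.integral_of_le hs,
      intervalIntegral.integral_div]
    have hcomp := intervalIntegral.integral_comp_sub_left (a := s) (b := 1)
      (fun y : ℝ => y ^ (a - 1)) 1
    norm_num at hcomp
    rw [hcomp, integral_rpow (Or.inl (by linarith))]
    norm_num
    rw [Real.zero_rpow (by linarith)]
    ring_nf
  · have : Continuous fun x : ℝ => (1 - x) ^ (a - 1) / B :=
      (((rpow_cont ha).comp (continuous_const.sub continuous_id)).div_const B)
    exact this.continuousOn.integrableOn_Icc.mono_set Set.Ioo_subset_Icc_self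
  · filter_upwards [ae_restrict_mem measurableSet_Ioo] with x hx
    have : (0:ℝ) < 1 - x := by linarith [hx.2]
    positivity

lemma betaPrior_Ioo {a : ℝ} (ha : 1 < a) : betaPrior a a (Set.Ioo 0 1) = 1 := by
  have hB := betaFn_pos ha
  rw [betaPrior, withDensity_apply _ measurableSet_Ioo]
  rw [setLIntegral_congr_fun measurableSet_Ioo
    (fun x hx => if_pos hx)]
  rw [← ofReal_integral_eq_lintegral_ofReal]
  · rw [integral_div, ← integral_Ioc_eq_integral_Ioo,
      ← intervalIntegral.integral_of_le (by norm_num : (0:ℝ) ≤ 1)]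
    rw [show (∫ x in (0:ℝ)..1, x ^ (a-1) * (1-x)^(a-1)) = betaFn a a from rfl]
    rw [div_self hB.ne']
    norm_num
  · exact (((betaDens_cont ha).div_const _).continuousOn.integrableOn_Icc).mono_set
      Set.Ioo_subset_Icc_self
  · filter_upwards [ae_restrict_mem measurableSet_Ioo] with x hx
    have h1 : (0:ℝ) < x := hx.1
    have h2 : (0:ℝ) < 1 - x := by linarith [hx.2]
    positivity

lemma betaPrior_compl_Ioo {a : ℝ} (ha : 1 < a) : betaPrior a a (Set.Ioo 0 1)ᶜ = 0 := by
  rw [betaPrior, withDensity_apply _ measurableSet_Ioo.compl]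
  rw [setLIntegral_congr_fun measurableSet_Ioo.compl
    (fun x hx => if_neg hx)]
  simp

lemma mass_bound (n : ℕ) (hn : 1 ≤ n) {a : ℝ} (ha : 1 < a) (L : ℝ) (hL : Real.log n ≤ L) :
    betaPrior a a (thetaL n L)ᶜ
      ≤ ENNReal.ofReal (2 / (a * betaFn a a) * (n : ℝ) ^ a * Real.exp (-(a * L))) := by
  have hB := betaFn_pos ha
  have hN : (0 : ℝ) < n := by exact_mod_cast hn
  have hE : (0 : ℝ) < Real.exp L := Real.exp_pos L
  have hEN : (n : ℝ) ≤ Real.exp L := by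
    calc (n : ℝ) = Real.exp (Real.log n) := (Real.exp_log hN).symm
      _ ≤ Real.exp L := Real.exp_le_exp.mpr hL
  set E := Real.exp L with hEdef
  set θlo := (1 + E / (n:ℝ))⁻¹ with hθlo
  set θhi := (1 + (n:ℝ) / E)⁻¹ with hθhi
  have hlo_pos : 0 < θlo := by rw [hθlo]; positivity
  have hlo_lt1 : θlo < 1 := by
    rw [hθlo, inv_lt_one_iff₀]
    right
    have := div_pos hE hN
    linarith
  have hhi_pos : 0 < θhi := by rw [hθhi]; positivity
  have hhi_lt1 : θhi < 1 := by
    rw [hθhi, inv_lt_one_iff₀]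
    right
    have := div_pos hN hE
    linarith
  have ha0 : (0:ℝ) < a := by linarith
  -- the target per-piece bound
  set T : ℝ := (n : ℝ) ^ a * Real.exp (-(a * L)) / a / betaFn a a with hT
  have hNE : ((n:ℝ) / E) ^ a = (n : ℝ) ^ a * Real.exp (-(a * L)) := by
    rw [Real.div_rpow hN.le hE.le, hEdef, ← Real.exp_mul, div_eq_mul_inv, ← Real.exp_neg]
    ring_nf
  have hsub : (thetaL n L)ᶜ ⊆ Set.Ioo 0 θlo ∪ (Set.Ioo θhi 1 ∪ (Set.Ioo (0:ℝ) 1)ᶜ) := by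
    intro x hx
    by_cases hx01 : x ∈ Set.Ioo (0:ℝ) 1
    · rw [thetaL, Set.mem_compl_iff, Set.mem_Icc, not_and_or] at hx
      rcases hx with hx | hx
      · left; exact ⟨hx01.1, by push_neg at hx; exact hx⟩
      · right; left; exact ⟨by push_neg at hx; exact hx, hx01.2⟩
    · right; right; exact hx01
  have meas_mono := measure_mono (μ := betaPrior a a) hsub
  have hmono : Measurable fun x : ℝ => ENNReal.ofReal (x ^ (a-1) / betaFn a a) :=
    ((rpow_cont ha).div_const _).measurable.ennreal_ofReal
  have hmono' : Measurable fun x : ℝ => ENNReal.ofReal ((1 - x) ^ (a-1) / betaFn a a) :=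
    ((((rpow_cont ha).comp (continuous_const.sub continuous_id)).div_const _)).measurable.ennreal_ofReal
  have bound1 : betaPrior a a (Set.Ioo 0 θlo) ≤ ENNReal.ofReal T := by
    rw [betaPrior, withDensity_apply _ measurableSet_Ioo]
    calc ∫⁻ x in Set.Ioo 0 θlo, _ ≤ ∫⁻ x in Set.Ioo 0 θlo,
          ENNReal.ofReal (x ^ (a-1) / betaFn a a) := by
          apply setLIntegral_mono hmono
          intro x hx
          rw [if_pos ⟨hx.1, lt_trans hx.2 hlo_lt1⟩]
          apply ENNReal.ofReal_le_ofReal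
          have hx1 : (1-x)^(a-1) ≤ 1 :=
            Real.rpow_le_one (by linarith [hx.2, hlo_lt1]) (by linarith [hx.1]) (by linarith)
          have hx0 : 0 ≤ x^(a-1) := Real.rpow_nonneg hx.1.le _
          gcongr
          nlinarith
      _ = ENNReal.ofReal (θlo ^ a / a / betaFn a a) := lint_rpow ha hB hlo_pos.le
      _ ≤ ENNReal.ofReal T := by
          apply ENNReal.ofReal_le_ofReal
          rw [hT, ← hNE]
          have hlo_le : θlo ≤ (n:ℝ) / E := by
            calc θlo ≤ (E / (n:ℝ))⁻¹ := inv_anti₀ (by positivity) (by linarith)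
              _ = (n:ℝ) / E := by rw [inv_div]
          have hθ : θlo ^ a ≤ ((n:ℝ)/E) ^ a := Real.rpow_le_rpow hlo_pos.le hlo_le ha0.le
          gcongr
  have bound2 : betaPrior a a (Set.Ioo θhi 1) ≤ ENNReal.ofReal T := by
    rw [betaPrior, withDensity_apply _ measurableSet_Ioo]
    calc ∫⁻ x in Set.Ioo θhi 1, _ ≤ ∫⁻ x in Set.Ioo θhi 1,
          ENNReal.ofReal ((1 - x) ^ (a-1) / betaFn a a) := by
          apply setLIntegral_mono hmono'
          intro x hx
          rw [if_pos ⟨lt_trans hhi_pos hx.1, hx.2⟩]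
          apply ENNReal.ofReal_le_ofReal
          have hx1 : x^(a-1) ≤ 1 :=
            Real.rpow_le_one (by linarith [hx.1, hhi_pos]) (by linarith [hx.2]) (by linarith)
          have hx0 : 0 ≤ (1-x)^(a-1) := Real.rpow_nonneg (by linarith [hx.2]) _
          gcongr
          nlinarith
      _ = ENNReal.ofReal ((1 - θhi) ^ a / a / betaFn a a) := lint_rpow_right ha hB hhi_lt1.le
      _ ≤ ENNReal.ofReal T := by
          apply ENNReal.ofReal_le_ofReal
          rw [hT, ← hNE]
          have hhi_le : 1 - θhi ≤ (n:ℝ) / E := by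
            have heq : 1 - θhi = ((n:ℝ)/E) / (1 + (n:ℝ)/E) := by
              rw [hθhi]; field_simp; ring
            rw [heq]
            exact div_le_self (by positivity) (by nlinarith [div_pos hN hE])
          have hθ : (1 - θhi) ^ a ≤ ((n:ℝ)/E) ^ a :=
            Real.rpow_le_rpow (by linarith) hhi_le ha0.le
          gcongr
  calc betaPrior a a (thetaL n L)ᶜ
      ≤ betaPrior a a (Set.Ioo 0 θlo ∪ (Set.Ioo θhi 1 ∪ (Set.Ioo (0:ℝ) 1)ᶜ)) := meas_mono
    _ ≤ betaPrior a a (Set.Ioo 0 θlo) +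
        (betaPrior a a (Set.Ioo θhi 1) + betaPrior a a (Set.Ioo (0:ℝ) 1)ᶜ) :=
        le_trans (measure_union_le _ _) (by gcongr; exact measure_union_le _ _)
    _ ≤ ENNReal.ofReal T + (ENNReal.ofReal T + 0) :=
        add_le_add bound1 (add_le_add bound2 (le_of_eq (betaPrior_compl_Ioo ha)))
    _ = ENNReal.ofReal (T + T) := by
        rw [add_zero, ← ENNReal.ofReal_add (by positivity) (by positivity)]
    _ = ENNReal.ofReal (2 / (a * betaFn a a) * (n : ℝ) ^ a * Real.exp (-(a * L))) := by
        congr 1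
        rw [hT]
        field_simp
        ring

lemma prior_lower (n : ℕ) (hn : 1 ≤ n) {a : ℝ} (ha : 1 < a) (L : ℝ)
    (hL : Real.log n ≤ L) (hLpos : 0 < L) (c : ℝ)
    (hc : c ≤ a - Real.log (2 * (n : ℝ) ^ a / (a * betaFn a a)) / L) :
    ENNReal.ofReal (1 - Real.exp (-(c * L))) ≤ betaPrior a a (thetaL n L) := by
  have hB := betaFn_pos ha
  have ha0 : (0:ℝ) < a := by linarith
  have hN : (0 : ℝ) < n := by exact_mod_cast hn
  have hna : (0:ℝ) < (n:ℝ) ^ a := Real.rpow_pos_of_pos hN a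
  set D : ℝ := 2 * (n : ℝ) ^ a / (a * betaFn a a) with hDdef
  have hD : 0 < D := by rw [hDdef]; positivity
  have h1 : c * L ≤ a * L - Real.log D := by
    have h2 := mul_le_mul_of_nonneg_right hc (le_of_lt hLpos)
    rw [sub_mul, div_mul_cancel₀ _ hLpos.ne'] at h2
    linarith
  have hbound_real : 2 / (a * betaFn a a) * (n : ℝ) ^ a * Real.exp (-(a * L))
      ≤ Real.exp (-(c * L)) := by
    calc 2 / (a * betaFn a a) * (n : ℝ) ^ a * Real.exp (-(a * L))
        = D * Real.exp (-(a * L)) := by rw [hDdef]; ring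
      _ = Real.exp (Real.log D) * Real.exp (-(a * L)) := by rw [Real.exp_log hD]
      _ = Real.exp (Real.log D - a * L) := by rw [← Real.exp_add]; ring_nf
      _ ≤ Real.exp (-(c * L)) := Real.exp_le_exp.mpr (by linarith)
  have hcompl2 : betaPrior a a (thetaL n L)ᶜ ≤ ENNReal.ofReal (Real.exp (-(c * L))) :=
    le_trans (mass_bound n hn ha L hL) (ENNReal.ofReal_le_ofReal hbound_real)
  have hmeas : MeasurableSet (thetaL n L) := measurableSet_Icc
  have htot : betaPrior a a Set.univ = 1 := by
    rw [← measure_add_measure_compl (measurableSet_Ioo : MeasurableSet (Set.Ioo (0:ℝ) 1)),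
      betaPrior_Ioo ha, betaPrior_compl_Ioo ha, add_zero]
  have hfin : betaPrior a a (thetaL n L)ᶜ ≠ ⊤ :=
    ne_top_of_le_ne_top ENNReal.ofReal_ne_top hcompl2
  have hsplit : betaPrior a a (thetaL n L) = 1 - betaPrior a a (thetaL n L)ᶜ := by
    have h := measure_add_measure_compl (μ := betaPrior a a) hmeas
    rw [htot] at h
    rw [← h, ENNReal.add_sub_cancel_right hfin]
  rw [hsplit]
  calc ENNReal.ofReal (1 - Real.exp (-(c * L)))
      = ENNReal.ofReal 1 - ENNReal.ofReal (Real.exp (-(c * L))) :=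
        ENNReal.ofReal_sub 1 (Real.exp_nonneg _)
    _ = 1 - ENNReal.ofReal (Real.exp (-(c * L))) := by rw [ENNReal.ofReal_one]
    _ ≤ 1 - betaPrior a a (thetaL n L)ᶜ := tsub_le_tsub_left hcompl2 1

/-- for the binomial likelihood with symmetric `Beta(α,α)` prior, `α > 1`:
for `L ≥ ln n`, the interval `Θ_L = [(1+e^L/n)⁻¹, (1+n/e^L)⁻¹]` is exactly the set of
`θ ∈ (0,1)` that are `L`-Lipschitz in the absolute log-ratio distance w.r.t.
`ρ(k₁,k₂) = |k₁−k₂|`; the prior mass outside `Θ_L` is at most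
`(2/(α·B(α,α)))·n^α·e^{−αL}`; hence `β(Θ_L) ≥ 1 − e^{−cL}` for any
`c ≤ α − ln(2·n^α/(α·B(α,α)))/L` whenever the latter quantity is positive. -/
theorem beta_binomial_assumption2 (n : ℕ) (hn : 1 ≤ n) (a : ℝ) (ha : 1 < a) :
    (∀ L : ℝ, Real.log n ≤ L →
      thetaL n L =
        {θ : ℝ | θ ∈ Set.Ioo (0 : ℝ) 1 ∧ ∀ k₁ k₂ : ℕ, k₁ ≤ n → k₂ ≤ n →
          lrdist (binomialDensity θ n k₁) (binomialDensity θ n k₂)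
            ≤ L * |(k₁ : ℝ) - (k₂ : ℝ)|}) ∧
    (∀ L : ℝ, Real.log n ≤ L →
      betaPrior a a (thetaL n L)ᶜ
        ≤ ENNReal.ofReal (2 / (a * betaFn a a) * (n : ℝ) ^ a * Real.exp (-(a * L)))) ∧
    (∀ L : ℝ, Real.log n ≤ L → 0 < L → ∀ c : ℝ,
      0 < a - Real.log (2 * (n : ℝ) ^ a / (a * betaFn a a)) / L →
      c ≤ a - Real.log (2 * (n : ℝ) ^ a / (a * betaFn a a)) / L →
      ENNReal.ofReal (1 - Real.exp (-(c * L))) ≤ betaPrior a a (thetaL n L)) := by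
  refine ⟨fun L hL => thetaL_char n hn L hL, fun L hL => mass_bound n hn ha L hL,
    fun L hL hLpos c _ hc => prior_lower n hn ha L hL hLpos c hc⟩
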